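/- Let K ⊂ ℂ be compact and let μ be a compactly supported probability measure on ℂ that is not supported on any circle centered at a point of K (i.e., there is no r ≥ 0 and z ∈ K with supp(μ) ⊂ {w : |w − z| = r}). Let X be a random variable with law μ. Then there exist p₀, ε₀ ∈ (0, 1/4) such that for every z ∈ K, sup_{r ≥ 0} ℙ(r e^{−ε₀} ≤ |X − z| ≤ r e^{ε₀}) ≤ 1 − p₀. -/

import Mathlib

open MeasureTheory Filter Topology
open scoped ENNReal

/-- If the compactly supported probability measure `μ` on `ℂ` is not supported on any
circle centered at a point of the compact set `K`, then there exist `p₀, ε₀ ∈ (0, 1/4)`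
such that for every `z ∈ K` and every `r ≥ 0`,
`ℙ(r e^{−ε₀} ≤ |X − z| ≤ r e^{ε₀}) ≤ 1 − p₀`. -/
theorem anticoncentration_annulus (K : Set ℂ) (hK : IsCompact K)
    (μ : Measure ℂ) [IsProbabilityMeasure μ]
    (hcs : ∃ S : Set ℂ, IsCompact S ∧ μ Sᶜ = 0)
    (hnc : ∀ z ∈ K, ∀ r : ℝ, 0 ≤ r → μ {w : ℂ | ‖w - z‖ = r} ≠ 1) :
    ∃ p₀ ε₀ : ℝ, p₀ ∈ Set.Ioo (0 : ℝ) (1 / 4) ∧ ε₀ ∈ Set.Ioo (0 : ℝ) (1 / 4) ∧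
      ∀ z ∈ K, ∀ r : ℝ, 0 ≤ r →
        μ {w : ℂ | r * Real.exp (-ε₀) ≤ ‖w - z‖ ∧
            ‖w - z‖ ≤ r * Real.exp ε₀} ≤ ENNReal.ofReal (1 - p₀) := by
  by_contra hcon
  push_neg at hcon
  obtain ⟨S, hScomp, hSnull⟩ := hcs
  have hmem : ∀ n : ℕ, (1 : ℝ)/(n+5) ∈ Set.Ioo (0:ℝ) (1/4) := by
    intro n
    constructor
    · positivity
    · rw [div_lt_div_iff₀ (by positivity) (by norm_num)]
      have : (0:ℝ) ≤ (n:ℝ) := Nat.cast_nonneg n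
      linarith
  have hseq : ∀ n : ℕ, ∃ z ∈ K, ∃ r : ℝ, 0 ≤ r ∧
      ENNReal.ofReal (1 - 1/(n+5)) <
        μ {w : ℂ | r * Real.exp (-(1/(n+5))) ≤ ‖w - z‖ ∧
            ‖w - z‖ ≤ r * Real.exp (1/(n+5))} :=
    fun n => hcon (1/(n+5)) (1/(n+5)) (hmem n) (hmem n)
  choose z hzK r hr0 hμ using hseq
  set ann : ℕ → Set ℂ := fun n =>
    {w : ℂ | r n * Real.exp (-(1/(n+5))) ≤ ‖w - z n‖ ∧
        ‖w - z n‖ ≤ r n * Real.exp (1/(n+5))} with hann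
  -- basic bounds on ε_n := 1/(n+5)
  have ht0 : ∀ n : ℕ, (0:ℝ) < 1/(n+5) := fun n => by positivity
  have ht1 : ∀ n : ℕ, (1:ℝ)/(n+5) ≤ 1 := by
    intro n
    rw [div_le_one (by positivity)]
    have : (0:ℝ) ≤ (n:ℝ) := Nat.cast_nonneg n
    linarith
  -- annuli have positive measure
  have hann_pos : ∀ n : ℕ, μ (ann n) ≠ 0 := by
    intro n
    have h45 : (0:ℝ) < 1 - 1/(n+5) := by
      have := ht1 n
      have h5 : (1:ℝ)/(n+5) ≤ 1/5 := by
        apply div_le_div_of_nonneg_left (by norm_num) (by norm_num)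
        have : (0:ℝ) ≤ (n:ℝ) := Nat.cast_nonneg n
        linarith
      linarith
    have : (0:ℝ≥0∞) < ENNReal.ofReal (1 - 1/(n+5)) := ENNReal.ofReal_pos.2 h45
    exact (lt_trans this (hμ n)).ne'
  -- bounds for S and K
  obtain ⟨R, hR⟩ := hScomp.isBounded.subset_closedBall (0:ℂ)
  obtain ⟨C, hC⟩ := hK.isBounded.subset_closedBall (0:ℂ)
  set M : ℝ := Real.exp 1 * (max R 0 + max C 0) with hMdef
  have hM0 : 0 ≤ M := by positivity
  have hrM : ∀ n, r n ≤ M := by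
    intro n
    have hinterne : μ (ann n ∩ S) ≠ 0 := by
      intro h0
      have h1 : μ (ann n \ S) = 0 :=
        measure_mono_null (fun x hx => hx.2) hSnull
      have h2 := measure_le_inter_add_diff μ (ann n) S
      rw [h0, h1] at h2
      simp at h2
      exact hann_pos n h2
    obtain ⟨w, hwann, hwS⟩ := nonempty_of_measure_ne_zero hinterne
    have hw1 : r n * Real.exp (-(1/(n+5))) ≤ ‖w - z n‖ := hwann.1
    have hwR : ‖w‖ ≤ max R 0 := by
      have := hR hwS
      rw [Metric.mem_closedBall, dist_zero_right] at this
      exact le_trans this (le_max_left _ _)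
    have hzC : ‖z n‖ ≤ max C 0 := by
      have := hC (hzK n)
      rw [Metric.mem_closedBall, dist_zero_right] at this
      exact le_trans this (le_max_left _ _)
    have htri : ‖w - z n‖ ≤ ‖w‖ + ‖z n‖ := by
      have := norm_sub_le w (z n)
      simpa using this
    have hstep : r n * Real.exp (-(1/(n+5))) ≤ max R 0 + max C 0 := by
      linarith
    -- multiply both sides by exp(1/(n+5)) ≤ exp 1
    have hmul := mul_le_mul_of_nonneg_right hstep (Real.exp_pos (1/(n+5))).le
    rw [mul_assoc, ← Real.exp_add] at hmul
    simp only [neg_add_cancel, Real.exp_zero, mul_one] at hmul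
    have hee : Real.exp (1/(n+5)) ≤ Real.exp 1 := Real.exp_le_exp.2 (ht1 n)
    calc r n ≤ (max R 0 + max C 0) * Real.exp (1/(n+5)) := hmul
      _ ≤ (max R 0 + max C 0) * Real.exp 1 :=
          mul_le_mul_of_nonneg_left hee (by positivity)
      _ = M := by ring
  -- compactness: extract a convergent subsequence
  have hPmem : ∀ n : ℕ, ((z n, r n) : ℂ × ℝ) ∈ K ×ˢ Set.Icc (0:ℝ) M :=
    fun n => ⟨hzK n, hr0 n, hrM n⟩
  obtain ⟨⟨z₀, r₀⟩, hP₀, φ, hφmono, hφlim⟩ :=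
    (hK.prod isCompact_Icc).tendsto_subseq hPmem
  have hz₀K : z₀ ∈ K := hP₀.1
  have hr₀0 : 0 ≤ r₀ := hP₀.2.1
  rw [nhds_prod_eq, tendsto_prod_iff'] at hφlim
  have hzlim : Tendsto (fun n => z (φ n)) atTop (𝓝 z₀) := hφlim.1
  have hrlim : Tendsto (fun n => r (φ n)) atTop (𝓝 r₀) := hφlim.2
  -- ε along the subsequence tends to 0
  have htlim : Tendsto (fun n : ℕ => (1:ℝ)/(φ n + 5)) atTop (𝓝 0) := by
    have h1 : Tendsto (fun n : ℕ => ((n:ℝ) + 5)) atTop atTop :=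
      tendsto_atTop_add_const_right _ 5 tendsto_natCast_atTop_atTop
    have h2 : Tendsto (fun n : ℕ => ((n:ℝ) + 5)⁻¹) atTop (𝓝 0) := h1.inv_tendsto_atTop
    have h3 := h2.comp hφmono.tendsto_atTop
    simpa [one_div, Function.comp_def] using h3
  -- the error term tends to 0
  set Err : ℕ → ℝ := fun n =>
    |r (φ n) - r₀| + M * (Real.exp (1/(φ n + 5)) - 1) + ‖z (φ n) - z₀‖
    with hErrdef
  have hErrlim : Tendsto Err atTop (𝓝 0) := by
    have e1 : Tendsto (fun n => |r (φ n) - r₀|) atTop (𝓝 0) := by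
      have := (hrlim.sub_const r₀).abs
      simpa using this
    have e2 : Tendsto (fun n => M * (Real.exp (1/(φ n + 5)) - 1)) atTop (𝓝 0) := by
      have := ((Real.continuous_exp.tendsto 0).comp htlim).sub_const 1
      have := this.const_mul M
      simpa using this
    have e3 : Tendsto (fun n => ‖z (φ n) - z₀‖) atTop (𝓝 0) := by
      have := (hzlim.sub_const z₀).norm
      simpa using this
    have := (e1.add e2).add e3
    simpa [Err, one_div] using this
  -- key claim: every thin annulus around the limit circle has full measure
  have key : ∀ δ : ℝ, 0 < δ →
      μ {w : ℂ | r₀ - δ ≤ ‖w - z₀‖ ∧ ‖w - z₀‖ ≤ r₀ + δ} = 1 := by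
    intro δ hδ
    set A := {w : ℂ | r₀ - δ ≤ ‖w - z₀‖ ∧ ‖w - z₀‖ ≤ r₀ + δ} with hA
    have hincl : ∀ᶠ n in atTop, ann (φ n) ⊆ A := by
      filter_upwards [hErrlim.eventually (gt_mem_nhds hδ)] with n hn
      intro w hw
      set t := (1:ℝ)/(φ n + 5) with htdef
      have ht0' : 0 ≤ t := (ht0 (φ n)).le
      have hρ0 : 0 ≤ r (φ n) := hr0 (φ n)
      have hρM : r (φ n) ≤ M := hrM (φ n)
      have h1 : r (φ n) * Real.exp (-t) ≤ ‖w - z (φ n)‖ := hw.1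
      have h2 : ‖w - z (φ n)‖ ≤ r (φ n) * Real.exp t := hw.2
      have htri1 : ‖w - z₀‖ ≤
          ‖w - z (φ n)‖ + ‖z (φ n) - z₀‖ := by
        have := dist_triangle w (z (φ n)) z₀
        simpa [Complex.dist_eq] using this
      have htri2 : ‖w - z (φ n)‖ ≤
          ‖w - z₀‖ + ‖z (φ n) - z₀‖ := by
        have := dist_triangle w z₀ (z (φ n))
        rw [Complex.dist_eq, Complex.dist_eq, Complex.dist_eq] at this
        rw [← norm_neg (z (φ n) - z₀)]
        simpa using this
      have hexp1 : 1 - t ≤ Real.exp (-t) := by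
        have := Real.add_one_le_exp (-t); linarith
      have hexp2 : t + 1 ≤ Real.exp t := Real.add_one_le_exp t
      have habs1 : r (φ n) - r₀ ≤ |r (φ n) - r₀| := le_abs_self _
      have habs2 : r₀ - r (φ n) ≤ |r (φ n) - r₀| := by
        have := neg_abs_le (r (φ n) - r₀); linarith
      have hE : |r (φ n) - r₀| + M * (Real.exp t - 1) + ‖z (φ n) - z₀‖ < δ := hn
      have e1 : r (φ n) * (1 - t) ≤ r (φ n) * Real.exp (-t) :=
        mul_le_mul_of_nonneg_left hexp1 hρ0
      have e2 : r (φ n) * Real.exp t ≤ r (φ n) + M * (Real.exp t - 1) := by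
        nlinarith [mul_le_mul_of_nonneg_right hρM (show (0:ℝ) ≤ Real.exp t - 1 by nlinarith)]
      have e3 : r (φ n) * t ≤ M * (Real.exp t - 1) := by
        nlinarith [mul_le_mul_of_nonneg_right hρM ht0']
      constructor
      · nlinarith
      · nlinarith
    have hlower : ∀ η : ℝ, 0 < η → ENNReal.ofReal (1 - η) ≤ μ A := by
      intro η hη
      have hev2 : ∀ᶠ n in atTop, (1:ℝ)/(φ n + 5) < η := htlim.eventually (gt_mem_nhds hη)
      obtain ⟨n, hn1, hn2⟩ := (hincl.and hev2).exists
      calc ENNReal.ofReal (1 - η) ≤ ENNReal.ofReal (1 - 1/(φ n + 5)) :=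
            ENNReal.ofReal_le_ofReal (by linarith)
        _ ≤ μ (ann (φ n)) := (hμ (φ n)).le
        _ ≤ μ A := measure_mono hn1
    by_contra hA1
    have hfin : μ A ≠ ⊤ := (measure_lt_top μ A).ne
    have hAlt : μ A < 1 := lt_of_le_of_ne prob_le_one hA1
    have ha1 : (μ A).toReal < 1 := by
      have := ENNReal.toReal_lt_toReal hfin (by simp : (1:ℝ≥0∞) ≠ ⊤)
      simpa using this.2 hAlt
    set η := (1 - (μ A).toReal)/2 with hηdef
    have hη : 0 < η := by simp only [hηdef]; linarith
    have := (ENNReal.ofReal_le_iff_le_toReal hfin).1 (hlower η hη)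
    simp only [hηdef] at this
    linarith
  -- the circle has full measure: contradiction
  have hcirc : μ {w : ℂ | ‖w - z₀‖ = r₀} = 1 := by
    have hsets : {w : ℂ | ‖w - z₀‖ = r₀} =
        ⋂ m : ℕ, {w : ℂ | r₀ - 1/(m+1) ≤ ‖w - z₀‖ ∧
          ‖w - z₀‖ ≤ r₀ + 1/(m+1)} := by
      ext w
      simp only [Set.mem_iInter, Set.mem_setOf_eq]
      constructor
      · intro h m
        have hpos : (0:ℝ) < 1/(m+1) := by positivity
        constructor <;> [linarith; linarith]
      · intro h
        by_contra hne
        rcases lt_or_gt_of_ne hne with hlt | hgt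
        · obtain ⟨m, hm⟩ := exists_nat_one_div_lt (show 0 < r₀ - ‖w - z₀‖ by linarith)
          have := (h m).1
          linarith
        · obtain ⟨m, hm⟩ := exists_nat_one_div_lt (show 0 < ‖w - z₀‖ - r₀ by linarith)
          have := (h m).2
          linarith
    have hmeasA : ∀ (a b : ℝ), MeasurableSet {w : ℂ | a ≤ ‖w - z₀‖ ∧
        ‖w - z₀‖ ≤ b} := by
      intro a b
      have heq : {w : ℂ | a ≤ ‖w - z₀‖ ∧ ‖w - z₀‖ ≤ b} =
          (fun w : ℂ => ‖w - z₀‖) ⁻¹' Set.Icc a b := rfl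
      rw [heq]
      exact (continuous_norm.comp (continuous_id.sub continuous_const)).measurable
        measurableSet_Icc
    have hccompl : μ ({w : ℂ | ‖w - z₀‖ = r₀})ᶜ = 0 := by
      rw [hsets, Set.compl_iInter]
      apply measure_iUnion_null
      intro m
      rw [prob_compl_eq_zero_iff (hmeasA _ _)]
      exact key (1/(m+1)) (by positivity)
    have hmeasC : MeasurableSet {w : ℂ | ‖w - z₀‖ = r₀} := by
      have heq : {w : ℂ | ‖w - z₀‖ = r₀} =
          (fun w : ℂ => ‖w - z₀‖) ⁻¹' {r₀} := rfl
      rw [heq]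
      exact (continuous_norm.comp (continuous_id.sub continuous_const)).measurable
        (measurableSet_singleton r₀)
    exact (prob_compl_eq_zero_iff hmeasC).1 hccompl
  exact hnc z₀ hz₀K r₀ hr₀0 hcirc
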